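/- Let W be a real m×m matrix and A a real n×n matrix with spectral radius of |Aᵀ ⊗ W| strictly less than 1. Let D be a real m×n matrix with |D_{ij}| ≤ 1 for all i, j, and let C be any real m×n matrix. Then the backward-gradient equilibrium equation G = D ⊙ (Wᵀ G Aᵀ + C) has exactly one solution G ∈ ℝ^{m×n}, and it is obtained as the limit of the iteration G₀ = 0, G_{t+1} = D ⊙ (Wᵀ G_t Aᵀ + C). -/

import Mathlib

open Matrix Kronecker Filter
open scoped ENNReal NNReal

/-- The spectral radius of a real square matrix: the supremum of the moduli of its
complex eigenvalues (elements of the spectrum of the matrix viewed over `ℂ`). -/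
noncomputable def specRad {ι : Type*} [Fintype ι] [DecidableEq ι]
    (M : Matrix ι ι ℝ) : ENNReal :=
  spectralRadius ℂ (M.map Complex.ofReal)

section aux

attribute [local instance] Matrix.linftyOpNormedRing Matrix.linftyOpNormedAlgebra
  Matrix.linftyOpNormedAddCommGroup

variable {ι : Type*} [Fintype ι] [DecidableEq ι]

lemma entry_nnnorm_le (B : Matrix ι ι ℂ) (i j : ι) : ‖B i j‖₊ ≤ ‖B‖₊ := by
  rw [Matrix.linfty_opNNNorm_def]
  calc ‖B i j‖₊ ≤ ∑ j', ‖B i j'‖₊ :=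
        Finset.single_le_sum (f := fun j => ‖B i j‖₊) (fun _ _ => zero_le) (Finset.mem_univ j)
    _ ≤ Finset.univ.sup (fun i => ∑ j', ‖B i j'‖₊) :=
        Finset.le_sup (f := fun i => ∑ j', ‖B i j'‖₊) (Finset.mem_univ i)

lemma specRad_pow_decay (M : Matrix ι ι ℝ) (h : specRad M < 1) :
    ∃ r : NNReal, r < 1 ∧ ∀ᶠ t in atTop, ∀ q p : ι, |(M ^ t) q p| ≤ (r : ℝ) ^ t := by
  set a : Matrix ι ι ℂ := M.map Complex.ofReal with ha
  obtain ⟨r, hr1, hr2⟩ := ENNReal.lt_iff_exists_nnreal_btwn.mp h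
  refine ⟨r, by exact_mod_cast hr2, ?_⟩
  have hgel := spectrum.pow_nnnorm_pow_one_div_tendsto_nhds_spectralRadius a
  have hev : ∀ᶠ t : ℕ in atTop, ((‖a ^ t‖₊ : ENNReal) ^ (1 / (t : ℝ))) < (r : ENNReal) :=
    hgel.eventually_lt_const hr1
  filter_upwards [hev, eventually_ge_atTop 1] with t ht ht1 q p
  have htne : (t : ℝ) ≠ 0 := by positivity
  have h2 : (((‖a ^ t‖₊ : ℝ≥0∞) ^ (1/(t:ℝ))) ^ (t:ℝ)) < ((r:ℝ≥0∞)) ^ (t:ℝ) :=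
    ENNReal.rpow_lt_rpow ht (by positivity)
  rw [← ENNReal.rpow_mul, one_div, inv_mul_cancel₀ htne, ENNReal.rpow_one,
    ENNReal.rpow_natCast] at h2
  have h3 : ‖a ^ t‖₊ ≤ r ^ t := by
    have := h2.le
    rw [← ENNReal.coe_pow, ENNReal.coe_le_coe] at this
    exact this
  have h4 : a ^ t = (M ^ t).map Complex.ofReal := by
    have : a = Complex.ofRealHom.mapMatrix M := rfl
    rw [this, ← map_pow, RingHom.mapMatrix_apply]
    rfl
  have h5 : ‖(a ^ t) q p‖₊ ≤ r ^ t := le_trans (entry_nnnorm_le _ q p) h3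
  have h6 : ‖(a ^ t) q p‖ = |(M ^ t) q p| := by
    rw [h4]; simp [Matrix.map_apply, Complex.norm_real, Real.norm_eq_abs]
  calc |(M ^ t) q p| = ‖(a ^ t) q p‖ := h6.symm
    _ ≤ ((r ^ t : NNReal) : ℝ) := by exact_mod_cast h5
    _ = (r : ℝ) ^ t := by push_cast; ring

end aux

set_option maxHeartbeats 1600000 in
theorem stmt_16 {m n : ℕ} (W : Matrix (Fin m) (Fin m) ℝ) (A : Matrix (Fin n) (Fin n) ℝ)
    (hρ : specRad ((Aᵀ ⊗ₖ W).map fun a => |a|) < 1)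
    (D : Matrix (Fin m) (Fin n) ℝ) (hD : ∀ i j, |D i j| ≤ 1)
    (C : Matrix (Fin m) (Fin n) ℝ)
    (G : ℕ → Matrix (Fin m) (Fin n) ℝ)
    (hG0 : G 0 = 0)
    (hGs : ∀ t, G (t + 1) = Matrix.hadamard D (Wᵀ * G t * Aᵀ + C)) :
    ∃ Gs : Matrix (Fin m) (Fin n) ℝ,
      Gs = Matrix.hadamard D (Wᵀ * Gs * Aᵀ + C) ∧
      (∀ G' : Matrix (Fin m) (Fin n) ℝ,
        G' = Matrix.hadamard D (Wᵀ * G' * Aᵀ + C) → G' = Gs) ∧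
      Tendsto G atTop (nhds Gs) := by
  set N : Matrix (Fin n × Fin m) (Fin n × Fin m) ℝ := (Aᵀ ⊗ₖ W).map (fun a => |a|) with hN
  obtain ⟨r, hr1, hrev⟩ := specRad_pow_decay N hρ
  have hr0 : (0:ℝ) ≤ (r:ℝ) := r.coe_nonneg
  have hr1' : (r:ℝ) < 1 := by exact_mod_cast hr1
  have hNnn : ∀ q p, 0 ≤ N q p := fun q p => abs_nonneg _
  -- difference of F values
  have hFd : ∀ X Y : Matrix (Fin m) (Fin n) ℝ, ∀ i j,
      Matrix.hadamard D (Wᵀ * X * Aᵀ + C) i j - Matrix.hadamard D (Wᵀ * Y * Aᵀ + C) i j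
        = D i j * ((Wᵀ * (X - Y) * Aᵀ) i j) := by
    intro X Y i j
    have hsub : Wᵀ * (X - Y) * Aᵀ = Wᵀ * X * Aᵀ - Wᵀ * Y * Aᵀ := by
      rw [Matrix.mul_sub, Matrix.sub_mul]
    rw [hsub]
    simp only [Matrix.hadamard_apply, Matrix.sub_apply, Matrix.add_apply]
    ring
  -- the key entrywise bound
  have key : ∀ Z : Matrix (Fin m) (Fin n) ℝ, ∀ p : Fin n × Fin m,
      |D p.2 p.1 * ((Wᵀ * Z * Aᵀ) p.2 p.1)| ≤ ∑ q : Fin n × Fin m, |Z q.2 q.1| * N q p := by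
    intro Z p
    obtain ⟨j, i⟩ := p
    have hb : |(Wᵀ * Z * Aᵀ) i j| ≤ ∑ l, ∑ k, |Z k l| * |Aᵀ l j * Wᵀ i k| := by
      rw [Matrix.mul_apply]
      refine (Finset.abs_sum_le_sum_abs _ _).trans ?_
      refine Finset.sum_le_sum fun l _ => ?_
      rw [abs_mul, Matrix.mul_apply]
      calc |∑ k, Wᵀ i k * Z k l| * |Aᵀ l j|
          ≤ (∑ k, |Wᵀ i k * Z k l|) * |Aᵀ l j| :=
            mul_le_mul_of_nonneg_right (Finset.abs_sum_le_sum_abs _ _) (abs_nonneg _)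
        _ = ∑ k, |Z k l| * |Aᵀ l j * Wᵀ i k| := by
            rw [Finset.sum_mul]
            refine Finset.sum_congr rfl fun k _ => ?_
            rw [abs_mul, abs_mul]; ring
    calc |D i j * ((Wᵀ * Z * Aᵀ) i j)|
        = |D i j| * |(Wᵀ * Z * Aᵀ) i j| := abs_mul _ _
      _ ≤ 1 * |(Wᵀ * Z * Aᵀ) i j| := mul_le_mul_of_nonneg_right (hD i j) (abs_nonneg _)
      _ = |(Wᵀ * Z * Aᵀ) i j| := one_mul _
      _ ≤ ∑ l, ∑ k, |Z k l| * |Aᵀ l j * Wᵀ i k| := hb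
      _ = ∑ q : Fin n × Fin m, |Z q.2 q.1| * N q (j, i) := by
          rw [Fintype.sum_prod_type]
          refine Finset.sum_congr rfl fun l _ => Finset.sum_congr rfl fun k _ => ?_
          simp [hN, Matrix.map_apply, Matrix.kroneckerMap_apply, Matrix.transpose_apply]
  -- vecMul unfolding
  have hvm : ∀ (u : Fin n × Fin m → ℝ) (M : Matrix (Fin n × Fin m) (Fin n × Fin m) ℝ) p,
      Matrix.vecMul u M p = ∑ q, u q * M q p := by
    intro u M p
    simp [Matrix.vecMul, dotProduct]
  set v0 : Fin n × Fin m → ℝ := fun q => |(G 1 - G 0) q.2 q.1| with hv0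
  have hv0nn : ∀ q, 0 ≤ v0 q := fun q => abs_nonneg _
  -- iterated bound on differences
  have hiter : ∀ t (p : Fin n × Fin m),
      |(G (t+1) - G t) p.2 p.1| ≤ Matrix.vecMul v0 (N ^ t) p := by
    intro t
    induction t with
    | zero => intro p; rw [pow_zero, Matrix.vecMul_one]
    | succ t ih =>
      intro p
      have hdiff : (G (t+1+1) - G (t+1)) p.2 p.1
          = D p.2 p.1 * ((Wᵀ * (G (t+1) - G t) * Aᵀ) p.2 p.1) := by
        rw [Matrix.sub_apply]
        conv_lhs => rw [hGs t, hGs (t+1)]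
        exact hFd (G (t+1)) (G t) p.2 p.1
      rw [hdiff]
      refine (key (G (t+1) - G t) p).trans ?_
      rw [pow_succ, ← Matrix.vecMul_vecMul, hvm]
      exact Finset.sum_le_sum fun q _ =>
        mul_le_mul_of_nonneg_right (ih q) (hNnn q p)
  set c : ℝ := ∑ q, v0 q with hc
  have hcnn : 0 ≤ c := Finset.sum_nonneg fun q _ => hv0nn q
  -- eventual geometric bound
  have hgeo : ∀ᶠ t in atTop, ∀ i j, |G (t+1) i j - G t i j| ≤ c * (r:ℝ) ^ t := by
    filter_upwards [hrev] with t ht i j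
    have h1 : |(G (t+1) - G t) (j, i).2 (j, i).1| ≤ Matrix.vecMul v0 (N ^ t) (j, i) :=
      hiter t (j, i)
    have h2 : Matrix.vecMul v0 (N ^ t) (j, i) ≤ c * (r:ℝ) ^ t := by
      rw [hvm, hc, Finset.sum_mul]
      refine Finset.sum_le_sum fun q _ => ?_
      refine mul_le_mul_of_nonneg_left ?_ (hv0nn q)
      exact (le_abs_self _).trans (ht q (j, i))
    simpa [Matrix.sub_apply] using h1.trans h2
  -- summability of entrywise differences
  have hsum : ∀ i j, Summable (fun t => G (t+1) i j - G t i j) := by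
    intro i j
    refine Summable.of_norm_bounded_eventually_nat (g := fun t => c * (r:ℝ) ^ t)
      ((summable_geometric_of_lt_one hr0 hr1').mul_left c) ?_
    filter_upwards [hgeo] with t ht
    simpa [Real.norm_eq_abs] using ht i j
  set Gs : Matrix (Fin m) (Fin n) ℝ := Matrix.of fun i j => ∑' t, (G (t+1) i j - G t i j)
    with hGsdef
  -- entrywise convergence
  have htendE : ∀ i j, Tendsto (fun t => G t i j) atTop (nhds (Gs i j)) := by
    intro i j
    have h1 := (hsum i j).hasSum.tendsto_sum_nat
    have h2 : (fun T => ∑ t ∈ Finset.range T, (G (t+1) i j - G t i j))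
        = fun T => G T i j := by
      funext T
      rw [Finset.sum_range_sub (fun t => G t i j) T, hG0]
      simp
    rw [h2] at h1
    exact h1
  have htend : Tendsto G atTop (nhds Gs) := by
    refine tendsto_pi_nhds.mpr ?_
    intro i
    rw [tendsto_pi_nhds]
    intro j
    exact htendE i j
  -- Gs is a fixed point
  have hfix : Gs = Matrix.hadamard D (Wᵀ * Gs * Aᵀ + C) := by
    ext i j
    have hA : Tendsto (fun t => G (t+1) i j) atTop (nhds (Gs i j)) :=
      (htendE i j).comp (tendsto_add_atTop_nat 1)
    have hB : Tendsto (fun t => Matrix.hadamard D (Wᵀ * G t * Aᵀ + C) i j) atTop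
        (nhds (Matrix.hadamard D (Wᵀ * Gs * Aᵀ + C) i j)) := by
      simp only [Matrix.hadamard_apply, Matrix.add_apply, Matrix.mul_apply]
      refine Tendsto.const_mul (D i j) (Tendsto.add ?_ tendsto_const_nhds)
      refine tendsto_finset_sum _ fun l _ => Tendsto.mul ?_ tendsto_const_nhds
      exact tendsto_finset_sum _ fun k _ => Tendsto.const_mul _ (htendE k l)
    have heq : (fun t => G (t+1) i j) = fun t => Matrix.hadamard D (Wᵀ * G t * Aᵀ + C) i j := by
      funext t; rw [hGs t]
    rw [heq] at hA
    exact tendsto_nhds_unique hA hB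
  -- uniqueness
  have huniq : ∀ G' : Matrix (Fin m) (Fin n) ℝ,
      G' = Matrix.hadamard D (Wᵀ * G' * Aᵀ + C) → G' = Gs := by
    intro G' hG'
    have hdnn : ∀ q : Fin n × Fin m, (0:ℝ) ≤ |(G' - Gs) q.2 q.1| := fun q => abs_nonneg _
    have hdiff : ∀ p : Fin n × Fin m, (G' - Gs) p.2 p.1
        = D p.2 p.1 * ((Wᵀ * (G' - Gs) * Aᵀ) p.2 p.1) := by
      intro p
      rw [Matrix.sub_apply]
      nth_rewrite 1 [hG', hfix]
      exact hFd G' Gs p.2 p.1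
    have hd1 : ∀ t (p : Fin n × Fin m), |(G' - Gs) p.2 p.1|
        ≤ Matrix.vecMul (fun q => |(G' - Gs) q.2 q.1|) (N ^ t) p := by
      intro t
      induction t with
      | zero => intro p; rw [pow_zero, Matrix.vecMul_one]
      | succ t ih =>
        intro p
        have step : |(G' - Gs) p.2 p.1| ≤ ∑ q, |(G' - Gs) q.2 q.1| * N q p := by
          rw [hdiff p]; exact key (G' - Gs) p
        refine step.trans ?_
        rw [pow_succ, ← Matrix.vecMul_vecMul, hvm]
        exact Finset.sum_le_sum fun q _ =>
          mul_le_mul_of_nonneg_right (ih q) (hNnn q p)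
    have hzero : ∀ p : Fin n × Fin m, |(G' - Gs) p.2 p.1| = 0 := by
      intro p
      have hev : ∀ᶠ t in atTop,
          |(G' - Gs) p.2 p.1| ≤ (∑ q : Fin n × Fin m, |(G' - Gs) q.2 q.1|) * (r:ℝ) ^ t := by
        filter_upwards [hrev] with t ht
        refine (hd1 t p).trans ?_
        rw [hvm, Finset.sum_mul]
        refine Finset.sum_le_sum fun q _ => ?_
        exact mul_le_mul_of_nonneg_left ((le_abs_self _).trans (ht q p)) (hdnn q)
      have hlim : Tendsto (fun t : ℕ => (∑ q : Fin n × Fin m, |(G' - Gs) q.2 q.1|) * (r:ℝ) ^ t)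
          atTop (nhds 0) := by
        have := tendsto_pow_atTop_nhds_zero_of_lt_one hr0 hr1'
        simpa using this.const_mul _
      have := ge_of_tendsto hlim hev
      exact le_antisymm this (hdnn p)
    ext i j
    have := hzero (j, i)
    simp only [Matrix.sub_apply] at this
    have h0 : G' i j - Gs i j = 0 := abs_eq_zero.mp this
    linarith
  exact ⟨Gs, hfix, huniq, htend⟩
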